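/- arXiv:1003.0148 — 4 statements merged into one kernel-verified Lean document; each statement's English description precedes it below -/
import Mathlib

section
/- Let (u_k)_{k≥1} be a family of functions u_k : ℝ_{>0} → ℝ_{>0} such that liminf_{x→∞} u_k(x) > 0 for every k ≥ 1, and such that z·u_k(y)/u_k(yz) → 0 as z → ∞ uniformly in y ≥ 1 and k ≥ 1 (i.e. for every ε > 0 there is Z such that z·u_k(y) ≤ ε·u_k(yz) for all z ≥ Z, y ≥ 1, k ≥ 1). Let f : ℝ_{>0} → ℝ_{>0} be locally bounded (bounded on every compact subset of ℝ_{>0}), and suppose there are positive constants c₁, c₂, x₀ such that f(x) ≤ u_k(x) + c₁·k·f(c₂·x/k) for every integer k ≥ 1 and every real x ≥ x₀. Then there exist positive constants A, x₁ and an integer k ≥ 1 such that f(x) ≤ A·u_k(x) for all x ≥ x₁. -/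
set_option maxHeartbeats 1000000 in
/-- Gromov-type iteration lemma (Lemma `lemf` of Cornulier–Tessera).
Functions are defined on all of `ℝ` but all hypotheses and conclusions only concern
the positive reals, where the functions are assumed positive-valued.
"Locally bounded" means bounded on every compact subset of `ℝ_{>0}`. -/
theorem stmt0
    (u : ℕ → ℝ → ℝ)
    (hu_pos : ∀ k : ℕ, 1 ≤ k → ∀ x : ℝ, 0 < x → 0 < u k x)
    -- liminf_{x → ∞} u_k(x) > 0 for every k ≥ 1 :
    (hu_liminf : ∀ k : ℕ, 1 ≤ k → ∃ ε : ℝ, 0 < ε ∧ ∃ M : ℝ, ∀ x : ℝ, M ≤ x → ε ≤ u k x)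
    -- z·u_k(y)/u_k(yz) → 0 as z → ∞, uniformly in y ≥ 1 and k ≥ 1 :
    (hu_unif : ∀ ε : ℝ, 0 < ε → ∃ Z : ℝ, ∀ z : ℝ, Z ≤ z → ∀ y : ℝ, 1 ≤ y →
      ∀ k : ℕ, 1 ≤ k → z * u k y ≤ ε * u k (y * z))
    (f : ℝ → ℝ)
    (hf_pos : ∀ x : ℝ, 0 < x → 0 < f x)
    -- f is locally bounded on ℝ_{>0} :
    (hf_locbdd : ∀ s : Set ℝ, IsCompact s → s ⊆ Set.Ioi (0 : ℝ) →
      ∃ M : ℝ, ∀ x ∈ s, f x ≤ M)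
    (c₁ c₂ x₀ : ℝ) (hc₁ : 0 < c₁) (hc₂ : 0 < c₂) (hx₀ : 0 < x₀)
    (hmain : ∀ k : ℕ, 1 ≤ k → ∀ x : ℝ, x₀ ≤ x →
      f x ≤ u k x + c₁ * k * f (c₂ * x / k)) :
    ∃ (A x₁ : ℝ) (k : ℕ), 0 < A ∧ 0 < x₁ ∧ 1 ≤ k ∧
      ∀ x : ℝ, x₁ ≤ x → f x ≤ A * u k x := by
  set ε0 : ℝ := 1 / (2 * c₁ * c₂) with hε0def
  have hε0 : 0 < ε0 := by rw [hε0def]; positivity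
  clear_value ε0
  obtain ⟨Z, hZ⟩ := hu_unif ε0 hε0
  obtain ⟨n₀, hn₀⟩ := exists_nat_ge (c₂ * max Z 2)
  set k : ℕ := max 1 n₀ with hkdef
  have hk1 : 1 ≤ k := le_max_left _ _
  have hkpos : (0:ℝ) < (k:ℝ) := by exact_mod_cast Nat.lt_of_lt_of_le Nat.zero_lt_one hk1
  have hkR : c₂ * max Z 2 ≤ (k:ℝ) := by
    refine hn₀.trans ?_
    exact_mod_cast Nat.le_max_right 1 n₀
  clear_value k
  set lam : ℝ := (k:ℝ) / c₂ with hlamdef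
  have hlampos : 0 < lam := by rw [hlamdef]; positivity
  clear_value lam
  have hlammax : max Z 2 ≤ lam := by
    rw [hlamdef, le_div_iff₀ hc₂]
    linarith [hkR]
  have hlam2 : 2 ≤ lam := le_trans (le_max_right _ _) hlammax
  have hlamZ : Z ≤ lam := le_trans (le_max_left _ _) hlammax
  obtain ⟨εk, hεk, Mk, hMk⟩ := hu_liminf k hk1
  set X : ℝ := max x₀ (max 1 Mk) with hXdef
  have hX1 : (1:ℝ) ≤ X := le_trans (le_max_left _ _) (le_max_right _ _)
  have hXx₀ : x₀ ≤ X := le_max_left _ _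
  have hXMk : Mk ≤ X := le_trans (le_max_right _ _) (le_max_right _ _)
  clear_value X
  have hXpos : 0 < X := lt_of_lt_of_le one_pos hX1
  obtain ⟨M, hM⟩ := hf_locbdd (Set.Icc X (lam * X)) isCompact_Icc
    (fun x hx => lt_of_lt_of_le hXpos hx.1)
  set M' : ℝ := max M 1 with hM'def
  have hM'bd : M ≤ M' := le_max_left _ _
  have hM'pos : 0 < M' := lt_of_lt_of_le one_pos (le_max_right _ _)
  clear_value M'
  set A : ℝ := 2 + M' / εk with hAdef
  clear_value A
  have hA2 : 2 ≤ A := by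
    have : 0 ≤ M' / εk := by positivity
    linarith
  have hApos : 0 < A := by linarith
  -- key fact: c₁ * k * (ε0 / lam) = 1/2
  have hhalf : c₁ * (k:ℝ) * (ε0 / lam) = 1 / 2 := by
    rw [hε0def, hlamdef]
    field_simp
  -- base case : X ≤ x ≤ lam * X
  have base : ∀ x : ℝ, X ≤ x → x ≤ lam * X → f x ≤ A * u k x := by
    intro x hx hx2
    have hux : εk ≤ u k x := hMk x (le_trans hXMk hx)
    have hfx : f x ≤ M' := le_trans (hM x ⟨hx, hx2⟩) hM'bd
    have h1 : f x ≤ (M' / εk) * u k x := by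
      calc f x ≤ M' := hfx
        _ = (M' / εk) * εk := by field_simp
        _ ≤ (M' / εk) * u k x := by
            apply mul_le_mul_of_nonneg_left hux (by positivity)
    have hupos : 0 < u k x := hu_pos k hk1 x (lt_of_lt_of_le hXpos hx)
    calc f x ≤ (M' / εk) * u k x := h1
      _ ≤ A * u k x := by
          apply mul_le_mul_of_nonneg_right _ hupos.le
          subst hAdef; linarith
  have key : ∀ n : ℕ, ∀ x : ℝ, X ≤ x → x ≤ lam ^ n * (lam * X) → f x ≤ A * u k x := by
    intro n
    induction n with
    | zero =>
      intro x hx hx2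
      rw [pow_zero, one_mul] at hx2
      exact base x hx hx2
    | succ n ih =>
      intro x hx hx2
      by_cases h : x ≤ lam * X
      · exact base x hx h
      push_neg at h
      have hxX : X < x := lt_of_le_of_lt (by nlinarith [hXpos, hlam2]) h
      have hxx₀ : x₀ ≤ x := le_trans hXx₀ hxX.le
      have hrec := hmain k hk1 x hxx₀
      have harg : c₂ * x / (k:ℝ) = x / lam := by
        rw [hlamdef]; field_simp
      rw [harg] at hrec
      have hdiv1 : X ≤ x / lam := by
        rw [le_div_iff₀ hlampos]; nlinarith [h]
      have hdiv2 : x / lam ≤ lam ^ n * (lam * X) := by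
        rw [div_le_iff₀ hlampos]
        calc x ≤ lam ^ (n+1) * (lam * X) := hx2
          _ = lam ^ n * (lam * X) * lam := by ring
      have ihx := ih (x / lam) hdiv1 hdiv2
      have hy1 : (1:ℝ) ≤ x / lam := le_trans hX1 hdiv1
      have huni := hZ lam hlamZ (x / lam) hy1 k hk1
      rw [div_mul_cancel₀ x (ne_of_gt hlampos)] at huni
      -- u k (x/lam) ≤ (ε0/lam) * u k x
      have huni' : u k (x / lam) ≤ (ε0 / lam) * u k x := by
        rw [div_mul_eq_mul_div, le_div_iff₀ hlampos]
        linarith [huni]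
      have hupos' : 0 < u k (x / lam) := hu_pos k hk1 _ (lt_of_lt_of_le hXpos hdiv1)
      have hupos : 0 < u k x := hu_pos k hk1 x (lt_of_lt_of_le hXpos hx)
      have hck : 0 < c₁ * (k:ℝ) := by positivity
      calc f x ≤ u k x + c₁ * k * f (x / lam) := hrec
        _ ≤ u k x + c₁ * k * (A * u k (x / lam)) := by
            have := mul_le_mul_of_nonneg_left ihx hck.le
            linarith
        _ ≤ u k x + c₁ * k * (A * ((ε0 / lam) * u k x)) := by
            have := mul_le_mul_of_nonneg_left
              (mul_le_mul_of_nonneg_left huni' hApos.le) hck.le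
            linarith
        _ = u k x + (c₁ * (k:ℝ) * (ε0 / lam)) * A * u k x := by ring
        _ = u k x + (1/2) * A * u k x := by rw [hhalf]
        _ ≤ A * u k x := by
            linarith [mul_le_mul_of_nonneg_right hA2 hupos.le]
  refine ⟨A, X, k, hApos, hXpos, hk1, fun x hx => ?_⟩
  obtain ⟨n, hn⟩ := pow_unbounded_of_one_lt x (by linarith : (1:ℝ) < lam)
  refine key n x hx ?_
  have hlamX1 : (1:ℝ) ≤ lam * X := by nlinarith [hX1, hlam2]
  have hpn : 0 < lam ^ n := by positivity
  nlinarith [hn.le, hpn, hlamX1]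
end

section
/- Let G be a group, S ⊆ G a symmetric generating set, and κ ≥ 1 a fixed integer. Suppose 𝓕 ⊆ F(S) is efficient with constant C, i.e. for every word w ∈ F(S) there exists w' ∈ 𝓕 with π(w') = π(w) and |w'| ≤ C·|w|. Then for every positive integer k and every real n > 0 one has δ(n) ≤ k·δ((C+1)·⌈n/k⌉) + δ_{𝓕[k]}(C·k·⌈n/k⌉); in particular, for n ≥ k, δ(n) ≤ k·δ(2(C+1)·n/k) + δ_{𝓕[k]}(2C·n). -/
open scoped BigOperators

namespace DehnCT

variable {G : Type*} [Group G] (S : Set G)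

/-- The canonical homomorphism `π : F(S) → G` from the free group on `S`. -/
noncomputable def pi : FreeGroup S →* G := FreeGroup.lift Subtype.val

/-- The reduced word length of an element of the free group. -/
noncomputable def len (w : FreeGroup S) : ℕ :=
  letI := Classical.decEq S
  w.norm

/-- `w` is a product (in the free group) of exactly `N` conjugates of elements of
`R ∪ R⁻¹`. -/
def IsProdConj (R : Set (FreeGroup S)) (N : ℕ) (w : FreeGroup S) : Prop :=
  ∃ L : List (FreeGroup S × FreeGroup S), L.length = N ∧
    (∀ p ∈ L, p.2 ∈ R ∨ p.2⁻¹ ∈ R) ∧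
    w = (L.map fun p => p.1 * p.2 * p.1⁻¹).prod

/-- The area of `w` with respect to the set of relators `R`:
the least `N` (possibly `∞`) such that `w` is a product of `N`
conjugates of elements of `R ∪ R⁻¹`. -/
noncomputable def area (R : Set (FreeGroup S)) (w : FreeGroup S) : ℕ∞ :=
  ⨅ (N : ℕ) (_ : IsProdConj S R N w), (N : ℕ∞)

/-- The relators : null-homotopic words of length at most `κ`. -/
def relators (κ : ℕ) : Set (FreeGroup S) :=
  {r | pi S r = 1 ∧ len S r ≤ κ}

/-- The Dehn function restricted to a set of words `F`: the supremum of the areas of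
null-homotopic words in `F` of length at most `x`. -/
noncomputable def dehnF (κ : ℕ) (F : Set (FreeGroup S)) (x : ℝ) : ℕ∞ :=
  ⨆ (w : FreeGroup S) (_ : w ∈ F) (_ : pi S w = 1) (_ : (len S w : ℝ) ≤ x),
    area S (relators S κ) w

/-- The Dehn function of `(G, S, κ)`. -/
noncomputable def dehn (κ : ℕ) (x : ℝ) : ℕ∞ := dehnF S κ Set.univ x

/-- `F[k]` : the set of words obtained as concatenations of at most `k` words of `F`. -/
def concats (F : Set (FreeGroup S)) (k : ℕ) : Set (FreeGroup S) :=
  {w | ∃ L : List (FreeGroup S), L.length ≤ k ∧ (∀ u ∈ L, u ∈ F) ∧ w = L.prod}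

/-- `F` is efficient with constant `C`. -/
def Efficient (F : Set (FreeGroup S)) (C : ℝ) : Prop :=
  ∀ w : FreeGroup S, ∃ w' ∈ F, pi S w' = pi S w ∧ (len S w' : ℝ) ≤ C * (len S w : ℝ)

end DehnCT

open DehnCT

/-! ### Auxiliary lemmas -/

section Aux

set_option linter.unusedSectionVars false

variable {G : Type*} [Group G] (S : Set G)

lemma CTlen_mul_le (u v : FreeGroup S) : len S (u * v) ≤ len S u + len S v := by
  letI := Classical.decEq S
  exact FreeGroup.norm_mul_le u v

lemma CTlen_inv (u : FreeGroup S) : len S u⁻¹ = len S u := by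
  letI := Classical.decEq S
  exact FreeGroup.norm_inv_eq

lemma CTlen_one : len S (1 : FreeGroup S) = 0 := by
  letI := Classical.decEq S
  exact FreeGroup.norm_one

lemma CTlen_mk_le (L : List (S × Bool)) : len S (FreeGroup.mk L) ≤ L.length := by
  letI := Classical.decEq S
  exact FreeGroup.norm_mk_le

lemma CTlen_eq_zero {u : FreeGroup S} : len S u = 0 ↔ u = 1 := by
  letI := Classical.decEq S
  exact FreeGroup.norm_eq_zero

lemma CTisProdConj_one (R : Set (FreeGroup S)) : IsProdConj S R 0 1 :=
  ⟨[], rfl, by simp, by simp⟩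

lemma CTarea_le {R : Set (FreeGroup S)} {N : ℕ} {w : FreeGroup S}
    (h : IsProdConj S R N w) : area S R w ≤ N :=
  iInf₂_le N h

lemma CTprod_map_conj {H : Type*} [Group H] (g : H) :
    ∀ M : List H, (M.map fun x => g * x * g⁻¹).prod = g * M.prod * g⁻¹
  | [] => by simp
  | a :: M => by
      rw [List.map_cons, List.prod_cons, CTprod_map_conj g M, List.prod_cons]; group

lemma CTexists_isProdConj_le {R : Set (FreeGroup S)} {w : FreeGroup S}
    (h : ∃ N, IsProdConj S R N w) :
    ∃ N, IsProdConj S R N w ∧ (N : ℕ∞) ≤ area S R w := by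
  classical
  refine ⟨Nat.find h, Nat.find_spec h, ?_⟩
  refine le_iInf fun M => le_iInf fun hM => ?_
  exact_mod_cast Nat.find_min' h hM

lemma CTarea_eq_top {R : Set (FreeGroup S)} {w : FreeGroup S}
    (h : ¬ ∃ N, IsProdConj S R N w) : area S R w = ⊤ := by
  rw [area, iInf_eq_top]
  intro N
  rw [iInf_eq_top]
  intro hN
  exact absurd ⟨N, hN⟩ h

lemma CTisProdConj_mul {R : Set (FreeGroup S)} {N₁ N₂ : ℕ} {u v : FreeGroup S}
    (h₁ : IsProdConj S R N₁ u) (h₂ : IsProdConj S R N₂ v) :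
    IsProdConj S R (N₁ + N₂) (u * v) := by
  obtain ⟨L₁, hl₁, hm₁, hp₁⟩ := h₁
  obtain ⟨L₂, hl₂, hm₂, hp₂⟩ := h₂
  refine ⟨L₁ ++ L₂, by simp [hl₁, hl₂], ?_, ?_⟩
  · intro p hp
    rcases List.mem_append.mp hp with h | h
    · exact hm₁ p h
    · exact hm₂ p h
  · rw [List.map_append, List.prod_append, hp₁, hp₂]

lemma CTarea_mul_le (R : Set (FreeGroup S)) (u v : FreeGroup S) :
    area S R (u * v) ≤ area S R u + area S R v := by
  by_cases hu : ∃ N, IsProdConj S R N u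
  · by_cases hv : ∃ N, IsProdConj S R N v
    · obtain ⟨N₁, h₁, hle₁⟩ := CTexists_isProdConj_le S hu
      obtain ⟨N₂, h₂, hle₂⟩ := CTexists_isProdConj_le S hv
      calc area S R (u * v) ≤ ((N₁ + N₂ : ℕ) : ℕ∞) := CTarea_le S (CTisProdConj_mul S h₁ h₂)
        _ = (N₁ : ℕ∞) + N₂ := by push_cast; ring
        _ ≤ area S R u + area S R v := add_le_add hle₁ hle₂
    · rw [CTarea_eq_top S hv, add_top]; exact le_top
  · rw [CTarea_eq_top S hu, top_add]; exact le_top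

lemma CTarea_conj_le (R : Set (FreeGroup S)) (g u : FreeGroup S) :
    area S R (g * u * g⁻¹) ≤ area S R u := by
  refine le_iInf fun N => le_iInf fun hN => ?_
  obtain ⟨L, hl, hm, hp⟩ := hN
  refine CTarea_le S ⟨L.map fun p => (g * p.1, p.2), by simp [hl], ?_, ?_⟩
  · intro p hp'
    obtain ⟨q, hq, rfl⟩ := List.mem_map.mp hp'
    exact hm q hq
  · rw [List.map_map]
    have : ((fun p : FreeGroup S × FreeGroup S => p.1 * p.2 * p.1⁻¹) ∘
        fun p : FreeGroup S × FreeGroup S => (g * p.1, p.2)) =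
        (fun x => g * x * g⁻¹) ∘ (fun p : FreeGroup S × FreeGroup S => p.1 * p.2 * p.1⁻¹) := by
      funext p
      simp [mul_assoc]
    rw [this, ← List.map_map, CTprod_map_conj, ← hp]

lemma CTexists_chunks {α : Type*} (m : ℕ) :
    ∀ (k : ℕ) (l : List α), l.length ≤ k * m →
      ∃ Ls : List (List α), Ls.length = k ∧ (∀ c ∈ Ls, c.length ≤ m) ∧ Ls.flatten = l
  | 0, l, h => by
      have : l = [] := List.length_eq_zero_iff.mp (Nat.le_antisymm (by simpa using h) (Nat.zero_le _))
      exact ⟨[], rfl, by simp, by simp [this]⟩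
  | k + 1, l, h => by
      obtain ⟨Ls, h₁, h₂, h₃⟩ := CTexists_chunks m k (l.drop m) (by
        rw [List.length_drop]
        rw [Nat.succ_mul] at h
        omega)
      refine ⟨l.take m :: Ls, by simp [h₁], ?_, by simp [h₃]⟩
      intro c hc
      rcases List.mem_cons.mp hc with rfl | hc
      · rw [List.length_take]; exact min_le_left _ _
      · exact h₂ c hc

lemma CTprod_map_mk (Ls : List (List (S × Bool))) :
    (Ls.map FreeGroup.mk).prod = FreeGroup.mk Ls.flatten := by
  induction Ls with
  | nil => simp [FreeGroup.one_eq_mk]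
  | cons a Ls ih => rw [List.map_cons, List.prod_cons, ih, List.flatten_cons, FreeGroup.mul_mk]

lemma CTlist_sum_le_length_mul {α : Type*} (g : α → ℕ∞) (c : ℕ∞) :
    ∀ L : List α, (∀ a ∈ L, g a ≤ c) → (L.map g).sum ≤ L.length * c
  | [], _ => by simp
  | a :: L, h => by
      rw [List.map_cons, List.sum_cons, List.length_cons, Nat.cast_succ, add_mul, one_mul,
        add_comm ((L.length : ℕ∞) * c) c]
      exact add_le_add (h a List.mem_cons_self)
        (CTlist_sum_le_length_mul g c L fun a ha => h a (List.mem_cons_of_mem _ ha))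

lemma CTarea_prod_map_le (R : Set (FreeGroup S)) (f : FreeGroup S → FreeGroup S) :
    ∀ A : List (FreeGroup S),
      area S R (A.prod * ((A.map f).prod)⁻¹) ≤ (A.map fun a => area S R (a * (f a)⁻¹)).sum
  | [] => by
      simpa using CTarea_le S (CTisProdConj_one S R)
  | a :: A => by
      have key : (a :: A).prod * (((a :: A).map f).prod)⁻¹
          = (a * (A.prod * ((A.map f).prod)⁻¹) * a⁻¹) * (a * (f a)⁻¹) := by
        simp only [List.map_cons, List.prod_cons, mul_inv_rev]
        group
      rw [key, List.map_cons, List.sum_cons, add_comm (area S R (a * (f a)⁻¹))]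
      exact le_trans (CTarea_mul_le S R _ _)
        (add_le_add ((CTarea_conj_le S R a _).trans (CTarea_prod_map_le R f A)) le_rfl)

lemma CTlen_list_prod_le (c : ℝ) :
    ∀ L : List (FreeGroup S), (∀ u ∈ L, (len S u : ℝ) ≤ c) →
      (len S L.prod : ℝ) ≤ L.length * c
  | [], _ => by simp [CTlen_one]
  | u :: L, h => by
      have h1 : (len S (u * L.prod) : ℝ) ≤ (len S u : ℝ) + (len S L.prod : ℝ) := by
        exact_mod_cast CTlen_mul_le S u L.prod
      have h2 := CTlen_list_prod_le c L (fun v hv => h v (List.mem_cons_of_mem _ hv))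
      have h3 := h u List.mem_cons_self
      rw [List.prod_cons, List.length_cons]
      push_cast
      linarith

lemma CTarea_le_dehnF {κ : ℕ} {F : Set (FreeGroup S)} {x : ℝ} {w : FreeGroup S}
    (hw : w ∈ F) (hπ : pi S w = 1) (hx : (len S w : ℝ) ≤ x) :
    area S (relators S κ) w ≤ dehnF S κ F x := by
  refine le_iSup_of_le w ?_
  refine le_iSup_of_le hw ?_
  refine le_iSup_of_le hπ ?_
  exact le_iSup_of_le hx le_rfl

lemma CTdehnF_mono {κ : ℕ} {F : Set (FreeGroup S)} {x y : ℝ} (h : x ≤ y) :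
    dehnF S κ F x ≤ dehnF S κ F y :=
  iSup_le fun w => iSup_le fun hw => iSup_le fun hπ => iSup_le fun hx =>
    CTarea_le_dehnF S hw hπ (hx.trans h)

lemma CTcore {κ : ℕ} (F : Set (FreeGroup S)) {C : ℝ} (hC : 0 ≤ C)
    (hFeff : Efficient S F C) (k m : ℕ) (w : FreeGroup S)
    (hπ : pi S w = 1) (hlen : len S w ≤ k * m) :
    area S (relators S κ) w ≤
      (k : ℕ∞) * dehn S κ ((C + 1) * m) + dehnF S κ (concats S F k) (C * (k : ℝ) * m) := by
  letI := Classical.decEq S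
  obtain ⟨Ls, hk', hm', hflat⟩ := CTexists_chunks m k w.toWord hlen
  set A : List (FreeGroup S) := Ls.map FreeGroup.mk with hA
  have hAprod : A.prod = w := by rw [hA, CTprod_map_mk, hflat, FreeGroup.mk_toWord]
  have hAlenEq : A.length = k := by rw [hA, List.length_map, hk']
  have hAlen : ∀ a ∈ A, len S a ≤ m := by
    intro a ha
    obtain ⟨c, hc, rfl⟩ := List.mem_map.mp ha
    exact (CTlen_mk_le S c).trans (hm' c hc)
  set f : FreeGroup S → FreeGroup S := fun u => (hFeff u).choose with hf
  have hfF : ∀ u, f u ∈ F := fun u => (hFeff u).choose_spec.1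
  have hfπ : ∀ u, pi S (f u) = pi S u := fun u => (hFeff u).choose_spec.2.1
  have hflen : ∀ u, (len S (f u) : ℝ) ≤ C * len S u := fun u => (hFeff u).choose_spec.2.2
  set B : List (FreeGroup S) := A.map f with hB
  have hBlenEq : B.length = k := by rw [hB, List.length_map, hAlenEq]
  have hBlen : ∀ b ∈ B, (len S b : ℝ) ≤ C * m := by
    intro b hb
    obtain ⟨a, ha, rfl⟩ := List.mem_map.mp hb
    refine (hflen a).trans (mul_le_mul_of_nonneg_left ?_ hC)
    exact_mod_cast hAlen a ha
  have hBprod_len : (len S B.prod : ℝ) ≤ C * (k : ℝ) * m := by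
    have h := CTlen_list_prod_le S (C * m) B hBlen
    rw [hBlenEq] at h
    calc (len S B.prod : ℝ) ≤ (k : ℝ) * (C * m) := h
      _ = C * (k : ℝ) * m := by ring
  have hBπ : pi S B.prod = 1 := by
    rw [map_list_prod]
    have heq : B.map (pi S) = A.map (pi S) := by
      rw [hB, List.map_map]
      exact List.map_congr_left fun a _ => hfπ a
    rw [heq, ← map_list_prod, hAprod, hπ]
  have hBmem : B.prod ∈ concats S F k := by
    refine ⟨B, hBlenEq.le, ?_, rfl⟩
    intro u hu
    obtain ⟨a, _, rfl⟩ := List.mem_map.mp hu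
    exact hfF a
  have h1 : area S (relators S κ) w ≤
      area S (relators S κ) (A.prod * (B.prod)⁻¹) + area S (relators S κ) B.prod := by
    have h := CTarea_mul_le S (relators S κ) (A.prod * (B.prod)⁻¹) B.prod
    rw [show A.prod * (B.prod)⁻¹ * B.prod = w by rw [← hAprod]; group] at h
    exact h
  have h2 : area S (relators S κ) (A.prod * (B.prod)⁻¹) ≤ (k : ℕ∞) * dehn S κ ((C + 1) * m) := by
    rw [hB]
    refine le_trans (CTarea_prod_map_le S _ f A) ?_
    have h := CTlist_sum_le_length_mul
        (fun a => area S (relators S κ) (a * (f a)⁻¹)) (dehn S κ ((C + 1) * m)) A ?_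
    · rw [hAlenEq] at h
      exact h
    · intro a ha
      refine CTarea_le_dehnF S (Set.mem_univ _) ?_ ?_
      · rw [map_mul, map_inv, hfπ]
        group
      · have hmm : (len S (a * (f a)⁻¹) : ℝ) ≤ (len S a : ℝ) + (len S (f a) : ℝ) := by
          have := CTlen_mul_le S a (f a)⁻¹
          rw [CTlen_inv] at this
          exact_mod_cast this
        have h3 : (len S a : ℝ) ≤ m := by exact_mod_cast hAlen a ha
        have h4 : (len S (f a) : ℝ) ≤ C * m :=
          (hflen a).trans (mul_le_mul_of_nonneg_left h3 hC)
        nlinarith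
  have h3 : area S (relators S κ) B.prod ≤ dehnF S κ (concats S F k) (C * (k : ℝ) * m) :=
    CTarea_le_dehnF S hBmem hBπ hBprod_len
  exact h1.trans (add_le_add h2 h3)

end Aux

/-- Lemma `astg` of Cornulier–Tessera. -/
theorem stmt1 {G : Type*} [Group G] (S : Set G)
    (hSsym : ∀ s ∈ S, s⁻¹ ∈ S) (hSgen : Subgroup.closure S = ⊤)
    (κ : ℕ) (hκ : 1 ≤ κ)
    (F : Set (FreeGroup S)) (C : ℝ) (hFeff : Efficient S F C) :
    (∀ k : ℕ, 0 < k → ∀ n : ℝ, 0 < n →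
      dehn S κ n ≤
        (k : ℕ∞) * dehn S κ ((C + 1) * (⌈n / (k : ℝ)⌉ : ℤ)) +
          dehnF S κ (concats S F k) (C * k * (⌈n / (k : ℝ)⌉ : ℤ))) ∧
    (∀ k : ℕ, 0 < k → ∀ n : ℝ, (k : ℝ) ≤ n →
      dehn S κ n ≤
        (k : ℕ∞) * dehn S κ ((C + 1) * (2 * n) / k) +
          dehnF S κ (concats S F k) (2 * C * n)) := by
  classical
  by_cases htriv : ∀ u : FreeGroup S, u = 1
  · constructor <;> intro k hk n hn <;>
    · refine iSup_le fun w => iSup_le fun _ => iSup_le fun _ => iSup_le fun _ => ?_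
      have harea : area S (relators S κ) w ≤ ((0 : ℕ) : ℕ∞) := by
        rw [htriv w]
        exact CTarea_le S (CTisProdConj_one S _)
      exact le_trans harea (by simpa using zero_le _)
  · have hC : 0 ≤ C := by
      obtain ⟨u, hu⟩ := not_forall.mp htriv
      have hlu : 0 < (len S u : ℝ) := by
        have hne : len S u ≠ 0 := fun h => hu ((CTlen_eq_zero S).mp h)
        exact_mod_cast Nat.pos_of_ne_zero hne
      obtain ⟨w', _, _, hw'⟩ := hFeff u
      nlinarith [(Nat.cast_nonneg (len S w') : (0:ℝ) ≤ (len S w' : ℝ))]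
    have part1 : ∀ k : ℕ, 0 < k → ∀ n : ℝ, 0 < n →
        dehn S κ n ≤
          (k : ℕ∞) * dehn S κ ((C + 1) * (⌈n / (k : ℝ)⌉ : ℤ)) +
            dehnF S κ (concats S F k) (C * k * (⌈n / (k : ℝ)⌉ : ℤ)) := by
      intro k hk n hn
      have hkpos : (0 : ℝ) < k := by exact_mod_cast hk
      set m : ℕ := (⌈n / (k : ℝ)⌉).toNat with hm
      have hceil_pos : 0 < ⌈n / (k : ℝ)⌉ := Int.ceil_pos.mpr (div_pos hn hkpos)
      have hmcast : ((m : ℕ) : ℝ) = ((⌈n / (k : ℝ)⌉ : ℤ) : ℝ) := by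
        rw [hm]
        exact_mod_cast Int.toNat_of_nonneg hceil_pos.le
      rw [← hmcast]
      refine iSup_le fun w => iSup_le fun _ => iSup_le fun hπ => iSup_le fun hlenw => ?_
      refine CTcore S F hC hFeff k m w hπ ?_
      have h1 : n ≤ (k : ℝ) * m := by
        rw [hmcast]
        calc n = (k : ℝ) * (n / k) := by field_simp
          _ ≤ (k : ℝ) * ((⌈n / (k : ℝ)⌉ : ℤ) : ℝ) :=
            mul_le_mul_of_nonneg_left (Int.le_ceil _) hkpos.le
      have h2 : (len S w : ℝ) ≤ ((k * m : ℕ) : ℝ) := by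
        push_cast
        exact hlenw.trans h1
      exact_mod_cast h2
    refine ⟨part1, ?_⟩
    intro k hk n hkn
    have hkpos : (0 : ℝ) < k := by exact_mod_cast hk
    have hn : 0 < n := lt_of_lt_of_le hkpos hkn
    have hceil : ((⌈n / (k : ℝ)⌉ : ℤ) : ℝ) ≤ 2 * n / k := by
      have h1 : ((⌈n / (k : ℝ)⌉ : ℤ) : ℝ) < n / k + 1 := Int.ceil_lt_add_one _
      have h2 : (1 : ℝ) ≤ n / k := (one_le_div hkpos).mpr hkn
      have h3 : 2 * n / k = n / k + n / k := by ring
      linarith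
    refine (part1 k hk n hn).trans (add_le_add ?_ ?_)
    · refine mul_le_mul_right (CTdehnF_mono S ?_) _
      calc (C + 1) * ((⌈n / (k : ℝ)⌉ : ℤ) : ℝ) ≤ (C + 1) * (2 * n / k) :=
            mul_le_mul_of_nonneg_left hceil (by linarith)
        _ = (C + 1) * (2 * n) / k := by ring
    · refine CTdehnF_mono S ?_
      have h := mul_le_mul_of_nonneg_left hceil (mul_nonneg hC hkpos.le)
      calc C * (k : ℝ) * ((⌈n / (k : ℝ)⌉ : ℤ) : ℝ) ≤ C * (k : ℝ) * (2 * n / k) := by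
            rw [mul_assoc, mul_assoc] at h ⊢
            exact h
        _ = 2 * C * n := by field_simp
end

section
/- Let K₁, …, K_m be normed fields with multiplicative norms, each locally compact and not discrete, let A be a finitely generated abelian group with finite symmetric generating set T, and let λᵢ : A → Kᵢˣ be homomorphisms such that for every i there exists a ∈ A with ‖λᵢ(a)‖ < 1. Let G = (K₁ × ⋯ × K_m) ⋊ A with a ∈ A acting by multiplying the i-th coordinate by λᵢ(a), and S = T ∪ ⋃ᵢ Bᵢ where Bᵢ = {x ∈ Kᵢ : ‖x‖ ≤ 1}. Fix a finite presentation of A over T with relator set R_A ⊆ F(T), and let R ⊆ F(S) consist of: the elements of R_A; all words t s t⁻¹ s'⁻¹ with t ∈ T, s, s' ∈ Bᵢ and λᵢ(t)·s = s'; all commutators [s, s'] with s ∈ Bᵢ, s' ∈ Bⱼ; and all words s s' s''⁻¹ with s, s', s'' ∈ Bᵢ and s + s' = s''. Then there exists a constant C such that for every n ≥ 1, every i, every v, w ∈ Bᵢ and every word s over T of length ≤ n such that λᵢ(π(s))·v = w, the null-homotopic word s v s⁻¹ w⁻¹ has R-area at most C·n². -/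
open scoped BigOperators

namespace SolCT

variable {m : ℕ} (K : Fin m → Type) [∀ i, NormedField (K i)]
variable {A : Type} [CommGroup A] (lam : ∀ i, A →* (K i)ˣ)

/-- The action of `A` on `⊕ᵢ Kᵢ`, multiplying the `i`-th coordinate by `λᵢ(a)`. -/
noncomputable def piAut : A →* Multiplicative (AddAut (∀ i, K i)) where
  toFun a := Multiplicative.ofAdd (AddEquiv.piCongrRight fun i =>
    Multiplicative.toAdd (DistribMulAction.toAddAut (K i)ˣ (K i) (lam i a)))
  map_one' := by
    apply AddEquiv.ext
    intro x
    funext i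
    simp [AddEquiv.piCongrRight, DistribMulAction.toAddAut]
    rfl
  map_mul' a b := by
    apply AddEquiv.ext
    intro x
    funext i
    simp [AddEquiv.piCongrRight, DistribMulAction.toAddAut, mul_smul]
    rfl

/-- The action, as a homomorphism to `MulAut` of the multiplicative version. -/
noncomputable def phi : A →* MulAut (Multiplicative (∀ i, K i)) where
  toFun a := AddEquiv.toMultiplicative (Multiplicative.toAdd (piAut K lam a))
  map_one' := by ext x; simp
  map_mul' a b := by ext x; simp [map_mul]

/-- The group `G = (K₁ × ⋯ × K_m) ⋊ A`. -/
noncomputable abbrev Grp : Type :=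
  SemidirectProduct (Multiplicative (∀ i, K i)) A (phi K lam)

/-- The element of `G` given by `x ∈ Kᵢ` placed in the `i`-th coordinate. -/
noncomputable def bLetter (i : Fin m) (x : K i) : Grp K lam :=
  SemidirectProduct.inl (Multiplicative.ofAdd (Pi.single i x))

/-- The element of `G` given by `t ∈ A`. -/
noncomputable def tLetter (t : A) : Grp K lam :=
  SemidirectProduct.inr t

/-- The generating set `S = T ∪ ⋃ᵢ Bᵢ`. -/
noncomputable def genS (T : Set A) : Set (Grp K lam) :=
  (tLetter K lam '' T) ∪ ⋃ i, bLetter K lam i '' {x : K i | ‖x‖ ≤ 1}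

end SolCT

namespace SolCT

variable {m : ℕ} (K : Fin m → Type) [∀ i, NormedField (K i)]
variable {A : Type} [CommGroup A] (lam : ∀ i, A →* (K i)ˣ)

/-- The letter of `F(S)` corresponding to `t ∈ T`. -/
noncomputable def ftl (T : Set A) (t : A) (ht : t ∈ T) : FreeGroup (genS K lam T) :=
  FreeGroup.of ⟨tLetter K lam t, Or.inl ⟨t, ht, rfl⟩⟩

/-- The letter of `F(S)` corresponding to `x ∈ Bᵢ`. -/
noncomputable def fbl (T : Set A) (i : Fin m) (x : K i) (hx : ‖x‖ ≤ 1) :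
    FreeGroup (genS K lam T) :=
  FreeGroup.of ⟨bLetter K lam i x, Or.inr (Set.mem_iUnion.2 ⟨i, ⟨x, hx, rfl⟩⟩)⟩

/-- The inclusion of the generators `T` of `A` into the generators `S` of `G`. -/
noncomputable def iotaTS (T : Set A) : T → genS K lam T :=
  fun t => ⟨tLetter K lam t.1, Or.inl ⟨t.1, t.2, rfl⟩⟩

/-- The induced map `F(T) → F(S)` on free groups. -/
noncomputable def mapTS (T : Set A) : FreeGroup T →* FreeGroup (genS K lam T) :=
  FreeGroup.map (iotaTS K lam T)

/-- The set `R` of relators: the relators `R_A` of `A`, the conjugation relators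
`t s t⁻¹ s'⁻¹`, the commutation relators `[s, s']`, and the addition relators
`s s' s''⁻¹`. -/
noncomputable def Rel (T : Set A) (RA : Set (FreeGroup T)) :
    Set (FreeGroup (genS K lam T)) :=
  (mapTS K lam T) '' RA ∪
  {w | ∃ (t : A) (ht : t ∈ T) (i : Fin m) (x x' : K i)
      (hx : ‖x‖ ≤ 1) (hx' : ‖x'‖ ≤ 1),
      ((lam i t : (K i)ˣ) : K i) * x = x' ∧
      w = ftl K lam T t ht * fbl K lam T i x hx * (ftl K lam T t ht)⁻¹ *
        (fbl K lam T i x' hx')⁻¹} ∪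
  {w | ∃ (i j : Fin m) (x : K i) (y : K j) (hx : ‖x‖ ≤ 1) (hy : ‖y‖ ≤ 1),
      w = fbl K lam T i x hx * fbl K lam T j y hy * (fbl K lam T i x hx)⁻¹ *
        (fbl K lam T j y hy)⁻¹} ∪
  {w | ∃ (i : Fin m) (x x' x'' : K i)
      (hx : ‖x‖ ≤ 1) (hx' : ‖x'‖ ≤ 1) (hx'' : ‖x''‖ ≤ 1),
      x + x' = x'' ∧
      w = fbl K lam T i x hx * fbl K lam T i x' hx' * (fbl K lam T i x'' hx'')⁻¹}

end SolCT

namespace CTAux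

variable {G : Type*} [Group G] {H : Type*} [Group H]

/-- `Bnd R N w`: `w` is a product of at most `N` conjugates of elements of `R ∪ R⁻¹`. -/
def Bnd (R : Set G) (N : ℕ) (w : G) : Prop :=
  ∃ L : List (G × G), L.length ≤ N ∧ (∀ p ∈ L, p.2 ∈ R ∨ p.2⁻¹ ∈ R) ∧
    w = (L.map fun p => p.1 * p.2 * p.1⁻¹).prod

theorem Bnd.one (R : Set G) (N : ℕ) : Bnd R N 1 :=
  ⟨[], by simp, by simp, by simp⟩

theorem Bnd.of_eq {R : Set G} {N : ℕ} {w w' : G} (h : Bnd R N w) (he : w = w') :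
    Bnd R N w' := he ▸ h

theorem Bnd.mono {R : Set G} {N M : ℕ} {w : G} (hNM : N ≤ M) (h : Bnd R N w) :
    Bnd R M w := by
  obtain ⟨L, hL, hmem, hprod⟩ := h
  exact ⟨L, hL.trans hNM, hmem, hprod⟩

theorem Bnd.subset {R R' : Set G} {N : ℕ} {w : G} (hRR : R ⊆ R') (h : Bnd R N w) :
    Bnd R' N w := by
  obtain ⟨L, hL, hmem, hprod⟩ := h
  exact ⟨L, hL, fun p hp => (hmem p hp).imp (@hRR p.2) (@hRR p.2⁻¹), hprod⟩

theorem Bnd.rel {R : Set G} {r : G} (h : r ∈ R ∨ r⁻¹ ∈ R) (g : G) :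
    Bnd R 1 (g * r * g⁻¹) :=
  ⟨[(g, r)], by simp, by simpa using h, by simp⟩

theorem Bnd.mul {R : Set G} {N M : ℕ} {w w' : G} (h : Bnd R N w) (h' : Bnd R M w') :
    Bnd R (N + M) (w * w') := by
  obtain ⟨L, hL, hmem, rfl⟩ := h
  obtain ⟨L', hL', hmem', rfl⟩ := h'
  refine ⟨L ++ L', by simpa using Nat.add_le_add hL hL', ?_, ?_⟩
  · intro p hp
    rcases List.mem_append.1 hp with h | h
    exacts [hmem p h, hmem' p h]
  · rw [List.map_append, List.prod_append]

private theorem conj_prod (g : G) (L : List (G × G)) :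
    g * (L.map fun p => p.1 * p.2 * p.1⁻¹).prod * g⁻¹
      = ((L.map fun p => (g * p.1, p.2)).map fun p => p.1 * p.2 * p.1⁻¹).prod := by
  induction L with
  | nil => simp
  | cons a L ih =>
    simp only [List.map_cons, List.prod_cons]
    rw [← ih]
    group

theorem Bnd.conj {R : Set G} {N : ℕ} {w : G} (h : Bnd R N w) (g : G) :
    Bnd R N (g * w * g⁻¹) := by
  obtain ⟨L, hL, hmem, rfl⟩ := h
  refine ⟨L.map fun p => (g * p.1, p.2), by simpa using hL, ?_, ?_⟩
  · intro p hp
    obtain ⟨q, hq, rfl⟩ := List.mem_map.1 hp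
    exact hmem q hq
  · exact conj_prod g L


private theorem inv_prod (L : List (G × G)) :
    ((L.map fun p => p.1 * p.2 * p.1⁻¹).prod)⁻¹
      = ((L.reverse.map fun p => (p.1, p.2⁻¹)).map fun p => p.1 * p.2 * p.1⁻¹).prod := by
  induction L with
  | nil => simp
  | cons a L ih =>
    simp only [List.map_cons, List.prod_cons, List.reverse_cons, List.map_append,
      List.prod_append, mul_inv_rev, List.map_nil, List.prod_cons, List.prod_nil]
    rw [← ih]
    group

theorem Bnd.inv {R : Set G} {N : ℕ} {w : G} (h : Bnd R N w) : Bnd R N w⁻¹ := by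
  obtain ⟨L, hL, hmem, rfl⟩ := h
  refine ⟨L.reverse.map fun p => (p.1, p.2⁻¹), by simpa using hL, ?_, ?_⟩
  · intro p hp
    obtain ⟨q, hq, rfl⟩ := List.mem_map.1 hp
    have := hmem q (List.mem_reverse.1 hq)
    simpa [or_comm] using this
  · exact inv_prod L

theorem Bnd.of_mem_normalClosure {R : Set G} {w : G} (h : w ∈ Subgroup.normalClosure R) :
    ∃ N, Bnd R N w := by
  refine Subgroup.closure_induction (fun x hx => ?_) ⟨0, Bnd.one R 0⟩
    (fun x y _ _ ⟨N, hN⟩ ⟨M, hM⟩ => ⟨N + M, hN.mul hM⟩)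
    (fun x _ ⟨N, hN⟩ => ⟨N, hN.inv⟩) h
  obtain ⟨a, ha, hconj⟩ := Group.mem_conjugatesOfSet_iff.1 hx
  obtain ⟨c, rfl⟩ := isConj_iff.1 hconj
  exact ⟨1, Bnd.rel (Or.inl ha) c⟩

theorem Bnd.comp {C R : Set G} {D N : ℕ} {w : G} (hC : ∀ c ∈ C, Bnd R D c)
    (h : Bnd C N w) : Bnd R (N * D) w := by
  obtain ⟨L, hL, hmem, rfl⟩ := h
  suffices hs : Bnd R (L.length * D) (L.map fun p => p.1 * p.2 * p.1⁻¹).prod by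
    exact hs.mono (Nat.mul_le_mul_right D hL)
  clear hL
  induction L with
  | nil => simpa using Bnd.one R 0
  | cons a L ih =>
    have ha : Bnd R D a.2 := by
      rcases hmem a (List.mem_cons_self) with h | h
      · exact hC a.2 h
      · simpa using (hC a.2⁻¹ h).inv
    have := (ha.conj a.1).mul (ih fun p hp => hmem p (List.mem_cons_of_mem a hp))
    simp only [List.map_cons, List.prod_cons, List.length_cons]
    exact this.mono (by rw [Nat.succ_mul, Nat.add_comm])

theorem Bnd.map {R : Set G} {N : ℕ} {w : G} (φ : G →* H) (h : Bnd R N w) :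
    Bnd (φ '' R) N (φ w) := by
  obtain ⟨L, hL, hmem, rfl⟩ := h
  refine ⟨L.map (Prod.map φ φ), by simpa using hL, ?_, ?_⟩
  · intro p hp
    obtain ⟨q, hq, rfl⟩ := List.mem_map.1 hp
    rcases hmem q hq with h | h
    · exact Or.inl ⟨q.2, h, rfl⟩
    · exact Or.inr ⟨q.2⁻¹, h, by simp [Prod.map]⟩
  · rw [map_list_prod, List.map_map, List.map_map]
    congr 1
    ext p
    simp [Prod.map]

theorem Bnd.commConj {R : Set G} {N : ℕ} {u : G} (h : Bnd R N u) (z : G) :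
    Bnd R (2 * N) (u * z * u⁻¹ * z⁻¹) := by
  have h2 : Bnd R N (z * u⁻¹ * z⁻¹) := h.inv.conj z
  exact ((h.mul h2).of_eq (by group)).mono (by omega)

section SortSec

variable {α : Type*} (e : α → G)

/-- The set of commutators of letters. -/
def Cset : Set G := {w | ∃ a b : α, w = e a * e b * (e a)⁻¹ * (e b)⁻¹}

theorem Bnd.push (x : α) (l : List α) :
    Bnd (Cset e) l.length
      (e x * (l.map e).prod * (e x)⁻¹ * ((l.map e).prod)⁻¹) := by
  induction l with
  | nil => exact (Bnd.one _ 0).of_eq (by simp)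
  | cons a l ih =>
    have hr : e x * e a * (e x)⁻¹ * (e a)⁻¹ ∈ Cset e := ⟨x, a, rfl⟩
    have h1 : Bnd (Cset e) 1 (e x * e a * (e x)⁻¹ * (e a)⁻¹) :=
      (Bnd.rel (Or.inl hr) 1).of_eq (by group)
    have h2 := h1.mul (ih.conj (e a))
    simp only [List.map_cons, List.prod_cons, List.length_cons]
    exact (h2.of_eq (by group)).mono (by omega)

theorem Bnd.sort (p : α → Bool) (l : List α) :
    Bnd (Cset e) (l.length * l.length)
      ((l.map e).prod *
        ((((l.filter p) ++ (l.filter fun a => !p a)).map e).prod)⁻¹) := by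
  induction l with
  | nil => exact (Bnd.one _ 0).of_eq (by simp)
  | cons a l ih =>
    by_cases h : p a
    · have hfa : (a :: l).filter p = a :: l.filter p := by simp [List.filter_cons, h]
      have hfb : (a :: l).filter (fun x => !p x) = l.filter (fun x => !p x) := by
        simp [List.filter_cons, h]
      rw [hfa, hfb, List.cons_append, List.map_cons, List.map_cons, List.prod_cons,
        List.prod_cons]
      refine ((ih.conj (e a)).of_eq (by group)).mono ?_
      simp only [List.length_cons]
      nlinarith [l.length.zero_le]
    · have hfa : (a :: l).filter p = l.filter p := by simp [List.filter_cons, h]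
      have hfb : (a :: l).filter (fun x => !p x) = a :: l.filter (fun x => !p x) := by
        simp [List.filter_cons, h]
      rw [hfa, hfb, List.map_cons, List.prod_cons, List.map_append, List.prod_append,
        List.map_cons, List.prod_cons]
      have h1 := ih.conj (e a)
      rw [List.map_append, List.prod_append] at h1
      have h3 := h1.mul (Bnd.push e a (l.filter p))
      refine (h3.of_eq (by group)).mono ?_
      have := List.length_filter_le p l
      simp only [List.length_cons]
      nlinarith

end SortSec

end CTAux
namespace CTAux

section Letters

variable {β : Type*}

/-- A signed letter as an element of the free group. -/
def el : β × Bool → FreeGroup β := fun a => cond a.2 (FreeGroup.of a.1) (FreeGroup.of a.1)⁻¹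

theorem mk_eq_prod (L : List (β × Bool)) : FreeGroup.mk L = (L.map el).prod := by
  induction L with
  | nil => rw [List.map_nil, List.prod_nil, ← FreeGroup.one_eq_mk]
  | cons a L ih =>
    have h1 : FreeGroup.mk (a :: L) = FreeGroup.mk [a] * FreeGroup.mk L := by
      rw [FreeGroup.mul_mk]; rfl
    rw [h1, ih, List.map_cons, List.prod_cons]
    congr 1
    rcases a with ⟨x, b⟩
    cases b
    · show FreeGroup.mk [(x, false)] = (FreeGroup.of x)⁻¹
      rw [show (FreeGroup.of x : FreeGroup β) = FreeGroup.mk [(x, true)] from rfl,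
        FreeGroup.inv_mk]
      rfl
    · rfl

theorem suffix_split {P Q s : List β} (h : s <:+ P ++ Q) :
    s <:+ Q ∨ ∃ p', p' <:+ P ∧ s = p' ++ Q := by
  obtain ⟨t, ht⟩ := h
  by_cases hlen : s.length ≤ Q.length
  · exact Or.inl (List.suffix_of_suffix_length_le ⟨t, ht⟩ (List.suffix_append P Q) hlen)
  · have hq : Q <:+ s :=
      List.suffix_of_suffix_length_le (List.suffix_append P Q) ⟨t, ht⟩ (by omega)
    obtain ⟨p', rfl⟩ := hq
    refine Or.inr ⟨p', ⟨t, ?_⟩, rfl⟩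
    apply List.append_cancel_right (bs := Q)
    rw [List.append_assoc]
    exact ht

end Letters

end CTAux

namespace SolCT

open CTAux

variable {m : ℕ} (K : Fin m → Type) [∀ i, NormedField (K i)]
variable {A : Type} [CommGroup A] (lam : ∀ i, A →* (K i)ˣ) (T : Set A)

/-- The multiplier of a signed letter. -/
noncomputable def fac (i : Fin m) : ↥T × Bool → (K i)ˣ :=
  fun a => cond a.2 (lam i a.1.1) (lam i a.1.1)⁻¹

theorem fbl_congr {i : Fin m} {x x' : K i} (h : x = x') (hx : ‖x‖ ≤ 1) (hx' : ‖x'‖ ≤ 1) :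
    fbl K lam T i x hx = fbl K lam T i x' hx' := by subst h; rfl

theorem mu_eq (i : Fin m) (L : List (↥T × Bool)) :
    lam i ((FreeGroup.lift Subtype.val : FreeGroup ↥T →* A) ((L.map el).prod)) =
      (L.map (fac K lam T i)).prod := by
  induction L with
  | nil => simp
  | cons a L ih =>
    rw [List.map_cons, List.prod_cons, map_mul, map_mul, ih, List.map_cons, List.prod_cons]
    congr 1
    rcases a with ⟨x, b⟩
    cases b
    · show lam i ((FreeGroup.lift Subtype.val) (FreeGroup.of x)⁻¹) = (lam i x.1)⁻¹
      rw [map_inv, map_inv, FreeGroup.lift_apply_of]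
    · show lam i ((FreeGroup.lift Subtype.val) (FreeGroup.of x)) = lam i x.1
      rw [FreeGroup.lift_apply_of]

theorem mapTS_el_true (t : ↥T) :
    mapTS K lam T (el (t, true)) = ftl K lam T t.1 t.2 := by
  show mapTS K lam T (FreeGroup.of t) = _
  rw [mapTS, FreeGroup.map.of]
  rfl

theorem mapTS_el_false (t : ↥T) :
    mapTS K lam T (el (t, false)) = (ftl K lam T t.1 t.2)⁻¹ := by
  show mapTS K lam T (FreeGroup.of t)⁻¹ = _
  rw [map_inv, mapTS, FreeGroup.map.of]
  rfl

theorem step (RA : Set (FreeGroup ↥T)) (i : Fin m) (a : ↥T × Bool) (x : K i)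
    (hx : ‖x‖ ≤ 1) (hx' : ‖((fac K lam T i a : (K i)ˣ) : K i) * x‖ ≤ 1) :
    Bnd (Rel K lam T RA) 1
      (mapTS K lam T (el a) * fbl K lam T i x hx * (mapTS K lam T (el a))⁻¹ *
        (fbl K lam T i (((fac K lam T i a : (K i)ˣ) : K i) * x) hx')⁻¹) := by
  obtain ⟨t, b⟩ := a
  cases b
  · -- inverse letter; multiplier is (lam i t)⁻¹
    have hmul : ((lam i t.1 : (K i)ˣ) : K i) * (((fac K lam T i (t, false) : (K i)ˣ) : K i) * x)
        = x := by
      show ((lam i t.1 : (K i)ˣ) : K i) * ((((lam i t.1)⁻¹ : (K i)ˣ) : K i) * x) = x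
      rw [← mul_assoc, ← Units.val_mul, mul_inv_cancel, Units.val_one, one_mul]
    have hmem : ftl K lam T t.1 t.2 *
          fbl K lam T i (((fac K lam T i (t, false) : (K i)ˣ) : K i) * x) hx' *
          (ftl K lam T t.1 t.2)⁻¹ * (fbl K lam T i x hx)⁻¹ ∈ Rel K lam T RA :=
      Or.inl (Or.inl (Or.inr ⟨t.1, t.2, i, _, x, hx', hx, hmul, rfl⟩))
    have h1 := Bnd.rel (r := (ftl K lam T t.1 t.2 *
          fbl K lam T i (((fac K lam T i (t, false) : (K i)ˣ) : K i) * x) hx' *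
          (ftl K lam T t.1 t.2)⁻¹ * (fbl K lam T i x hx)⁻¹)⁻¹)
      (Or.inr (by rwa [inv_inv])) ((ftl K lam T t.1 t.2)⁻¹)
    rw [mapTS_el_false]
    exact h1.of_eq (by group)
  · have hmem : ftl K lam T t.1 t.2 * fbl K lam T i x hx * (ftl K lam T t.1 t.2)⁻¹ *
        (fbl K lam T i (((fac K lam T i (t, true) : (K i)ˣ) : K i) * x) hx')⁻¹ ∈
          Rel K lam T RA :=
      Or.inl (Or.inl (Or.inr ⟨t.1, t.2, i, x, _, hx, hx', rfl, rfl⟩))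
    have h1 := Bnd.rel (Or.inl hmem) 1
    rw [mapTS_el_true]
    exact h1.of_eq (by group)

theorem chain (RA : Set (FreeGroup ↥T)) (i : Fin m) (v : K i) (hv : ‖v‖ ≤ 1) :
    ∀ (L : List (↥T × Bool))
      (_ : ∀ s : List (↥T × Bool), s <:+ L →
        ‖(((s.map (fac K lam T i)).prod : (K i)ˣ) : K i) * v‖ ≤ 1)
      (hL : ‖(((L.map (fac K lam T i)).prod : (K i)ˣ) : K i) * v‖ ≤ 1),
      Bnd (Rel K lam T RA) L.length
        (mapTS K lam T ((L.map el).prod) * fbl K lam T i v hv *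
          (mapTS K lam T ((L.map el).prod))⁻¹ *
          (fbl K lam T i ((((L.map (fac K lam T i)).prod : (K i)ˣ) : K i) * v) hL)⁻¹) := by
  intro L
  induction L with
  | nil =>
    intro _ hL
    rw [fbl_congr (K := K) (lam := lam) (T := T)
      (show (((([] : List (↥T × Bool)).map (fac K lam T i)).prod : (K i)ˣ) : K i) * v = v by
        simp) hL hv]
    simp only [List.map_nil, List.prod_nil, map_one]
    exact (Bnd.one _ 0).of_eq (by group)
  | cons a L ih =>
    intro hsuf hL
    have hu : ‖(((L.map (fac K lam T i)).prod : (K i)ˣ) : K i) * v‖ ≤ 1 :=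
      hsuf L (List.suffix_cons a L)
    have ihh := ih (fun s hs => hsuf s (hs.trans (List.suffix_cons a L))) hu
    have hx' : ‖((fac K lam T i a : (K i)ˣ) : K i) *
        ((((L.map (fac K lam T i)).prod : (K i)ˣ) : K i) * v)‖ ≤ 1 := by
      have : ((fac K lam T i a : (K i)ˣ) : K i) *
          ((((L.map (fac K lam T i)).prod : (K i)ˣ) : K i) * v)
          = ((((a :: L).map (fac K lam T i)).prod : (K i)ˣ) : K i) * v := by
        rw [List.map_cons, List.prod_cons, Units.val_mul, mul_assoc]
      rw [this]; exact hL
    have hstep := step K lam T RA i a _ hu hx'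
    have hall := (ihh.conj (mapTS K lam T (el a))).mul hstep
    rw [fbl_congr (K := K) (lam := lam) (T := T)
      (show ((fac K lam T i a : (K i)ˣ) : K i) *
          ((((L.map (fac K lam T i)).prod : (K i)ˣ) : K i) * v)
          = ((((a :: L).map (fac K lam T i)).prod : (K i)ˣ) : K i) * v by
        rw [List.map_cons, List.prod_cons, Units.val_mul, mul_assoc]) hx' hL] at hall
    rw [List.map_cons, List.prod_cons, map_mul]
    exact (hall.of_eq (by group)).mono (by simp)

end SolCT
namespace SolCT

open CTAux

variable {m : ℕ} (K : Fin m → Type) [∀ i, NormedField (K i)]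
variable {A : Type} [CommGroup A] (lam : ∀ i, A →* (K i)ˣ) (T : Set A)

theorem norm_fac_prod_le_one (i : Fin m) (s : List (↥T × Bool))
    (h : ∀ a ∈ s, ‖((fac K lam T i a : (K i)ˣ) : K i)‖ ≤ 1) :
    ‖(((s.map (fac K lam T i)).prod : (K i)ˣ) : K i)‖ ≤ 1 := by
  induction s with
  | nil => simp
  | cons a s ih =>
    rw [List.map_cons, List.prod_cons, Units.val_mul, norm_mul]
    have h1 := h a (List.mem_cons_self)
    have h2 := ih fun b hb => h b (List.mem_cons_of_mem a hb)
    nlinarith [norm_nonneg (((s.map (fac K lam T i)).prod : (K i)ˣ) : K i),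
      norm_nonneg ((fac K lam T i a : (K i)ˣ) : K i)]

theorem one_le_norm_fac_prod (i : Fin m) (s : List (↥T × Bool))
    (h : ∀ a ∈ s, 1 ≤ ‖((fac K lam T i a : (K i)ˣ) : K i)‖) :
    1 ≤ ‖(((s.map (fac K lam T i)).prod : (K i)ˣ) : K i)‖ := by
  induction s with
  | nil => simp
  | cons a s ih =>
    rw [List.map_cons, List.prod_cons, Units.val_mul, norm_mul]
    have h1 := h a (List.mem_cons_self)
    have h2 := ih fun b hb => h b (List.mem_cons_of_mem a hb)
    nlinarith

end SolCT
open SolCT DehnCT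

/-- Claim 1 in the proof of Theorem `meta` of Cornulier–Tessera:
the relation `s v s⁻¹ ≡ w` has `R`-area at most `C·n²`. -/
theorem stmt8 (m : ℕ) (K : Fin m → Type) [∀ i, NormedField (K i)]
    [∀ i, LocallyCompactSpace (K i)] (hnd : ∀ i, ¬ DiscreteTopology (K i))
    (A : Type) [CommGroup A]
    (T : Finset A) (hTsym : ∀ t ∈ T, t⁻¹ ∈ T)
    (hTgen : Subgroup.closure (T : Set A) = ⊤)
    (lam : ∀ i, A →* (K i)ˣ)
    (hcontr : ∀ i : Fin m, ∃ a : A, ‖((lam i a : (K i)ˣ) : K i)‖ < 1)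
    (RA : Set (FreeGroup (T : Set A))) (hRAfin : RA.Finite)
    (hpres : (FreeGroup.lift Subtype.val : FreeGroup (T : Set A) →* A).ker =
      Subgroup.normalClosure RA) :
    ∃ C : ℝ, ∀ n : ℕ, 1 ≤ n → ∀ (i : Fin m) (v w : K i)
      (hv : ‖v‖ ≤ 1) (hw : ‖w‖ ≤ 1) (σ : FreeGroup (T : Set A)),
      len (T : Set A) σ ≤ n →
      ((lam i ((FreeGroup.lift Subtype.val : FreeGroup (T : Set A) →* A) σ) :
          (K i)ˣ) : K i) * v = w →
      ∃ L : List (FreeGroup (genS K lam (T : Set A)) ×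
          FreeGroup (genS K lam (T : Set A))),
        (L.length : ℝ) ≤ C * (n : ℝ) ^ 2 ∧
        (∀ p ∈ L, p.2 ∈ Rel K lam (T : Set A) RA ∨
          p.2⁻¹ ∈ Rel K lam (T : Set A) RA) ∧
        mapTS K lam (T : Set A) σ * fbl K lam (T : Set A) i v hv *
            (mapTS K lam (T : Set A) σ)⁻¹ * (fbl K lam (T : Set A) i w hw)⁻¹ =
          (L.map fun p => p.1 * p.2 * p.1⁻¹).prod := by
  classical
  haveI : Fintype ↥(T : Set A) := T.finite_toSet.fintype
  have hcomm : ∀ q : (↥(T : Set A) × Bool) × (↥(T : Set A) × Bool),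
      ∃ N, CTAux.Bnd RA N
        (CTAux.el q.1 * CTAux.el q.2 * (CTAux.el q.1)⁻¹ * (CTAux.el q.2)⁻¹) := by
    intro q
    apply CTAux.Bnd.of_mem_normalClosure
    rw [← hpres]
    have hcc : ∀ x y : A, x * y * x⁻¹ * y⁻¹ = 1 := by
      intro x y; rw [mul_comm x y]; group
    simp [MonoidHom.mem_ker, map_mul, map_inv, hcc]
  choose Nf hNf using hcomm
  set D := Finset.univ.sup Nf with hD
  have hDb : ∀ c ∈ CTAux.Cset (CTAux.el (β := ↥(T : Set A))), CTAux.Bnd RA D c := by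
    rintro c ⟨a, b, rfl⟩
    exact (hNf (a, b)).mono (Finset.le_sup (Finset.mem_univ _))
  refine ⟨2 * D + 1, ?_⟩
  intro n hn i v w hv hw σ hlen heq
  set W : List (↥(T : Set A) × Bool) := @FreeGroup.toWord _ (Classical.decEq _) σ with hWdef
  have hWlen : W.length ≤ n := hlen
  have hσ : σ = (W.map CTAux.el).prod := by
    rw [hWdef, ← CTAux.mk_eq_prod]
    exact (@FreeGroup.mk_toWord _ (Classical.decEq _) σ).symm
  set p : ↥(T : Set A) × Bool → Bool :=
    fun a => decide (1 < ‖((fac K lam (T : Set A) i a : (K i)ˣ) : K i)‖) with hp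
  have hperm : (W.filter p ++ W.filter fun a => !p a).Perm W := List.filter_append_perm p W
  -- the value identity
  have hvalkey :
      ((((W.filter p ++ W.filter fun a => !p a).map (fac K lam (T : Set A) i)).prod :
        (K i)ˣ) : K i) * v = w := by
    rw [← mu_eq]
    have hpi : (FreeGroup.lift Subtype.val : FreeGroup ↥(T : Set A) →* A)
        (((W.filter p ++ W.filter fun a => !p a).map CTAux.el).prod)
        = (FreeGroup.lift Subtype.val : FreeGroup ↥(T : Set A) →* A) σ := by
      rw [hσ, map_list_prod, map_list_prod, List.map_map, List.map_map]
      exact List.Perm.prod_eq (hperm.map _)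
    rw [hpi]
    exact heq
  -- the suffix condition
  have hsuf : ∀ s : List (↥(T : Set A) × Bool), s <:+ (W.filter p ++ W.filter fun a => !p a) →
      ‖(((s.map (fac K lam (T : Set A) i)).prod : (K i)ˣ) : K i) * v‖ ≤ 1 := by
    intro s hs
    rcases CTAux.suffix_split hs with hsQ | ⟨p', hp', rfl⟩
    · have hns : ‖(((s.map (fac K lam (T : Set A) i)).prod : (K i)ˣ) : K i)‖ ≤ 1 := by
        refine norm_fac_prod_le_one K lam (T : Set A) i s fun a ha => ?_
        have haQ := hsQ.subset ha
        have hpa := (List.mem_filter.1 haQ).2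
        have : ¬ (1 < ‖((fac K lam (T : Set A) i a : (K i)ˣ) : K i)‖) := by
          intro hcon
          rw [hp] at hpa
          simp [hcon] at hpa
        linarith [not_lt.1 this]
      rw [norm_mul]
      nlinarith [norm_nonneg v, norm_nonneg (((s.map (fac K lam (T : Set A) i)).prod :
        (K i)ˣ) : K i)]
    · obtain ⟨t, htp⟩ := hp'
      have h1 : 1 ≤ ‖(((t.map (fac K lam (T : Set A) i)).prod : (K i)ˣ) : K i)‖ := by
        refine one_le_norm_fac_prod K lam (T : Set A) i t fun a ha => ?_
        have haP : a ∈ W.filter p := by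
          rw [← htp]; exact List.mem_append_left _ ha
        have hpa := (List.mem_filter.1 haP).2
        rw [hp] at hpa
        exact le_of_lt (of_decide_eq_true hpa)
      have hsplit : ((W.filter p ++ W.filter fun a => !p a).map
            (fac K lam (T : Set A) i)).prod
          = (t.map (fac K lam (T : Set A) i)).prod *
            ((p' ++ W.filter fun a => !p a).map (fac K lam (T : Set A) i)).prod := by
        rw [← htp, List.append_assoc, List.map_append, List.prod_append]
      calc ‖((((p' ++ W.filter fun a => !p a).map (fac K lam (T : Set A) i)).prod :
            (K i)ˣ) : K i) * v‖
          ≤ ‖(((t.map (fac K lam (T : Set A) i)).prod : (K i)ˣ) : K i)‖ *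
            ‖((((p' ++ W.filter fun a => !p a).map (fac K lam (T : Set A) i)).prod :
              (K i)ˣ) : K i) * v‖ :=
            le_mul_of_one_le_left (norm_nonneg _) h1
        _ = ‖((((W.filter p ++ W.filter fun a => !p a).map (fac K lam (T : Set A) i)).prod :
              (K i)ˣ) : K i) * v‖ := by
            simp only [hsplit, Units.val_mul, mul_assoc, norm_mul]
        _ = ‖w‖ := by rw [hvalkey]
        _ ≤ 1 := hw
  have hPQv : ‖((((W.filter p ++ W.filter fun a => !p a).map
      (fac K lam (T : Set A) i)).prod : (K i)ˣ) : K i) * v‖ ≤ 1 := by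
    rw [hvalkey]; exact hw
  have B4 := chain K lam (T : Set A) RA i v hv (W.filter p ++ W.filter fun a => !p a)
    hsuf hPQv
  rw [fbl_congr (K := K) (lam := lam) (T := (T : Set A)) hvalkey hPQv hw] at B4
  have B1 := CTAux.Bnd.sort (CTAux.el (β := ↥(T : Set A))) p W
  rw [← hσ] at B1
  have B2 := CTAux.Bnd.comp hDb B1
  have B3 := (B2.map (mapTS K lam (T : Set A))).subset
    (fun x hx => (Or.inl (Or.inl (Or.inl hx)) :
      x ∈ Rel K lam (T : Set A) RA))
  rw [map_mul, map_inv] at B3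
  have B5 := B3.commConj (fbl K lam (T : Set A) i w hw)
  have Btot := (B4.conj (mapTS K lam (T : Set A) σ *
    (mapTS K lam (T : Set A) (((W.filter p ++ W.filter fun a => !p a).map
      CTAux.el).prod))⁻¹)).mul B5
  obtain ⟨Lw, hlenL, hmem, hprod⟩ := Btot
  refine ⟨Lw, ?_, hmem, ?_⟩
  swap
  · rw [← hprod]; group
  have hPQlen : (W.filter p ++ W.filter fun a => !p a).length = W.length := hperm.length_eq
  have hnat : Lw.length ≤ (2 * D + 1) * (n * n) := by
    refine hlenL.trans ?_
    rw [hPQlen]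
    have h2 : W.length * W.length ≤ n * n := Nat.mul_le_mul hWlen hWlen
    have h3 : W.length ≤ n * n := le_trans hWlen (Nat.le_mul_of_pos_left n hn)
    have h4 : W.length * W.length * D ≤ n * n * D := Nat.mul_le_mul_right D h2
    have h5 : (2 * D + 1) * (n * n) = 2 * (n * n * D) + n * n := by ring
    linarith
  calc (Lw.length : ℝ) ≤ (((2 * D + 1) * (n * n) : ℕ) : ℝ) := by exact_mod_cast hnat
    _ = (2 * (D : ℝ) + 1) * (n : ℝ) ^ 2 := by push_cast; ring
end

section
/- Let n be a nonzero integer, let BS(1,n) be the group presented by generators t, x and the single relator t x t⁻¹ x^{-n}, and let Γ_n = ℤ[1/n]² ⋊ ℤ² where the standard generators of ℤ² act on ℤ[1/n]² by A = n·I₂ and B = [[2,1],[1,1]] respectively. Then the homomorphism BS(1,n) → Γ_n determined by x ↦ ((1,0), (0,0)) and t ↦ ((0,0), (1,0)) is well defined and injective; in particular Γ_n contains a subgroup isomorphic to BS(1,n). -/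
namespace GammaCT

/-- `ℤ[1/n]`, the subring of `ℚ` generated by `1/n`. -/
def Rn (n : ℤ) : Subring ℚ := Subring.closure {1 / (n : ℚ)}

/-- `n`, as an element of `ℤ[1/n]`. -/
def nEl (n : ℤ) : Rn n := ⟨(n : ℚ), intCast_mem _ n⟩

/-- `1/n`, as an element of `ℤ[1/n]`. -/
def nInv (n : ℤ) : Rn n :=
  ⟨(n : ℚ)⁻¹, by
    simpa [Rn, one_div] using Subring.subset_closure (s := {1 / (n : ℚ)}) rfl⟩

instance addAutGroup (A : Type*) [Add A] : Group (AddAut A) where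
  mul g h := AddEquiv.trans h g
  one := AddEquiv.refl _
  inv := AddEquiv.symm
  mul_assoc _ _ _ := rfl
  one_mul _ := rfl
  mul_one _ := rfl
  inv_mul_cancel := AddEquiv.self_trans_symm

@[simp]
theorem addAut_mul_apply {A : Type*} [Add A] (e₁ e₂ : AddAut A) (m : A) :
    (e₁ * e₂) m = e₁ (e₂ m) :=
  rfl

@[simp]
theorem addAut_one_apply {A : Type*} [Add A] (m : A) : (1 : AddAut A) m = m :=
  rfl

/-- The additive automorphism of `ℤ[1/n]²` given by the matrix `A = n·I₂`. -/
def Aaut (n : ℤ) (hn : n ≠ 0) : AddAut (Rn n × Rn n) where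
  toFun x := (nEl n * x.1, nEl n * x.2)
  invFun x := (nInv n * x.1, nInv n * x.2)
  left_inv x := by
    have h : nInv n * nEl n = 1 :=
      Subtype.ext (by
        simpa [nInv, nEl] using inv_mul_cancel₀ (by exact_mod_cast hn : (n : ℚ) ≠ 0))
    simp [← mul_assoc, h]
  right_inv x := by
    have h : nEl n * nInv n = 1 :=
      Subtype.ext (by
        simpa [nInv, nEl] using mul_inv_cancel₀ (by exact_mod_cast hn : (n : ℚ) ≠ 0))
    simp [← mul_assoc, h]
  map_add' x y := by
    simp only [Prod.fst_add, Prod.snd_add, mul_add]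
    rfl

/-- The additive automorphism of `ℤ[1/n]²` given by the matrix `B = [[2,1],[1,1]]`. -/
def Baut (n : ℤ) : AddAut (Rn n × Rn n) where
  toFun x := (2 * x.1 + x.2, x.1 + x.2)
  invFun y := (y.1 - y.2, -y.1 + 2 * y.2)
  left_inv x := by
    refine Prod.ext ?_ ?_ <;> simp <;> ring
  right_inv y := by
    refine Prod.ext ?_ ?_ <;> simp <;> ring
  map_add' x y := by
    refine Prod.ext ?_ ?_ <;> simp <;> ring

theorem Aaut_Baut_comm (n : ℤ) (hn : n ≠ 0) :
    Aaut n hn * Baut n = Baut n * Aaut n hn := by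
  ext x <;> simp [Aaut, Baut, addAut_mul_apply] <;> push_cast <;> ring

/-- The action of `ℤ²` on `ℤ[1/n]²`: the pair `(a, b)` acts by `A^a B^b`. -/
def psi (n : ℤ) (hn : n ≠ 0) :
    Multiplicative (ℤ × ℤ) →* AddAut (Rn n × Rn n) where
  toFun g := Aaut n hn ^ (Multiplicative.toAdd g).1 * Baut n ^ (Multiplicative.toAdd g).2
  map_one' := by simp
  map_mul' g h := by
    have hc : Commute (Baut n) (Aaut n hn) := (Aaut_Baut_comm n hn).symm
    show Aaut n hn ^ ((Multiplicative.toAdd g).1 + (Multiplicative.toAdd h).1) *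
        Baut n ^ ((Multiplicative.toAdd g).2 + (Multiplicative.toAdd h).2) = _
    rw [zpow_add, zpow_add,
      Commute.mul_mul_mul_comm (hc.zpow_zpow _ _)]

/-- The action, in multiplicative form. -/
def phiG (n : ℤ) (hn : n ≠ 0) :
    Multiplicative (ℤ × ℤ) →* MulAut (Multiplicative (Rn n × Rn n)) where
  toFun g := AddEquiv.toMultiplicative (psi n hn g)
  map_one' := by rw [map_one]; rfl
  map_mul' a b := by rw [map_mul]; rfl

/-- The group `Γ_n = ℤ[1/n]² ⋊ ℤ²`. -/
abbrev Gamma (n : ℤ) (hn : n ≠ 0) : Type :=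
  SemidirectProduct (Multiplicative (Rn n × Rn n)) (Multiplicative (ℤ × ℤ)) (phiG n hn)

end GammaCT

open GammaCT

/-- The single relator `t x t⁻¹ x⁻ⁿ` of `BS(1,n)`, on the generators
`true ↦ t`, `false ↦ x`. -/
def BSrel (n : ℤ) : Set (FreeGroup Bool) :=
  {FreeGroup.of true * FreeGroup.of false * (FreeGroup.of true)⁻¹ *
    (FreeGroup.of false) ^ (-n)}

/-- The solvable Baumslag–Solitar group `BS(1,n) = ⟨t, x | t x t⁻¹ = xⁿ⟩`. -/
def BS (n : ℤ) : Type := PresentedGroup (BSrel n)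

instance (n : ℤ) : Group (BS n) := by unfold BS; infer_instance

section Aux
variable (n : ℤ) (hn : n ≠ 0)

lemma AautInv_apply (p : Rn n × Rn n) :
    (Aaut n hn)⁻¹ p = (nInv n * p.1, nInv n * p.2) := rfl

lemma AautInv_pow_apply (a : ℕ) (p : Rn n × Rn n) :
    ((Aaut n hn)⁻¹ ^ a) p = ((nInv n) ^ a * p.1, (nInv n) ^ a * p.2) := by
  induction a generalizing p with
  | zero => simp
  | succ k ih =>
      rw [pow_succ, addAut_mul_apply, AautInv_apply, ih]
      simp only [pow_succ]
      exact Prod.ext (by ring) (by ring)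

lemma Aaut_zpow_neg (a : ℕ) (p : Rn n × Rn n) :
    ((Aaut n hn) ^ (-(a : ℤ))) p = ((nInv n) ^ a * p.1, (nInv n) ^ a * p.2) := by
  rw [zpow_neg, zpow_natCast, ← inv_pow, AautInv_pow_apply]

end Aux

namespace GammaCT
section Aux2
variable (n : ℤ) (hn : n ≠ 0)

/-- Shorthand generators of Gamma. -/
noncomputable def Xg : Gamma n hn := SemidirectProduct.inl (Multiplicative.ofAdd ((1 : Rn n), (0 : Rn n)))
noncomputable def Tg : Gamma n hn := SemidirectProduct.inr (Multiplicative.ofAdd ((1 : ℤ), (0 : ℤ)))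

lemma Xg_zpow (m : ℤ) : (Xg n hn) ^ m =
    SemidirectProduct.inl (Multiplicative.ofAdd ((m : Rn n), (0 : Rn n))) := by
  rw [Xg, ← map_zpow, ← ofAdd_zsmul]
  congr 2
  apply Prod.ext <;> simp

lemma Tg_zpow (b : ℤ) : (Tg n hn) ^ b =
    SemidirectProduct.inr (Multiplicative.ofAdd ((b : ℤ), (0 : ℤ))) := by
  rw [Tg, ← map_zpow, ← ofAdd_zsmul]
  congr 2
  apply Prod.ext <;> simp

lemma phiG_apply_calc (a : ℕ) (m : ℤ) :
    phiG n hn (Multiplicative.ofAdd ((-(a:ℤ), 0) : ℤ × ℤ))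
      (Multiplicative.ofAdd (((m : Rn n), (0 : Rn n)))) =
    Multiplicative.ofAdd (((nInv n) ^ a * (m : Rn n), (0 : Rn n))) := by
  show Multiplicative.ofAdd (psi n hn _ _) = _
  rw [psi]
  simp only [MonoidHom.coe_mk, OneHom.coe_mk, toAdd_ofAdd, zpow_zero, mul_one]
  erw [Aaut_zpow_neg]
  show Multiplicative.ofAdd ((nInv n ^ a * (m : Rn n), nInv n ^ a * (0 : Rn n))) = _
  simp

lemma form (a : ℕ) (m b : ℤ) :
    ((Tg n hn)⁻¹ ^ a * (Xg n hn) ^ m * (Tg n hn) ^ b) =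
    ⟨Multiplicative.ofAdd ((nInv n) ^ a * (m : Rn n), (0 : Rn n)),
     Multiplicative.ofAdd ((b - a : ℤ), (0 : ℤ))⟩ := by
  rw [inv_pow, ← zpow_natCast (Tg n hn) a, ← zpow_neg, Tg_zpow, Xg_zpow, Tg_zpow]
  apply SemidirectProduct.ext
  · simp only [SemidirectProduct.mul_left, SemidirectProduct.left_inl,
      SemidirectProduct.left_inr, SemidirectProduct.right_inr, SemidirectProduct.right_inl, map_one, mul_one, one_mul]
    rw [phiG_apply_calc]
  · simp only [SemidirectProduct.mul_right, SemidirectProduct.right_inl,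
      SemidirectProduct.right_inr, mul_one, one_mul]
    rw [← ofAdd_add]
    congr 1
    apply Prod.ext <;> simp; ring

end Aux2
end GammaCT

section BSide
variable (n : ℤ)

local notation "tt" => (PresentedGroup.of true : PresentedGroup (BSrel n))
local notation "xx" => (PresentedGroup.of false : PresentedGroup (BSrel n))

lemma BS_rel : tt * xx * tt⁻¹ = xx ^ n := by
  have h : (QuotientGroup.mk (FreeGroup.of true * FreeGroup.of false * (FreeGroup.of true)⁻¹ *
      (FreeGroup.of false) ^ (-n)) : PresentedGroup (BSrel n)) = 1 :=
    (QuotientGroup.eq_one_iff _).2 (Subgroup.subset_normalClosure rfl)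
  simp only [QuotientGroup.mk_mul, QuotientGroup.mk_inv, QuotientGroup.mk_zpow] at h
  have h2 : tt * xx * tt⁻¹ * xx ^ (-n) = 1 := h
  rw [zpow_neg] at h2
  exact eq_of_mul_inv_eq_one h2

lemma BS_conj_zpow (m : ℤ) : tt * xx ^ m * tt⁻¹ = xx ^ (n * m) := by
  rw [← conj_zpow, BS_rel, ← zpow_mul]

lemma BS_L2 (c : ℕ) (m : ℤ) : tt ^ c * xx ^ m = xx ^ (n ^ c * m) * tt ^ c := by
  induction c generalizing m with
  | zero => simp
  | succ k ih =>
      have h1 : tt * xx ^ m = xx ^ (n * m) * tt := by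
        have h := BS_conj_zpow n m
        rw [← h]; group
      calc tt ^ (k+1) * xx ^ m = tt ^ k * (tt * xx ^ m) := by rw [pow_succ]; group
        _ = tt ^ k * (xx ^ (n * m) * tt) := by rw [h1]
        _ = (tt ^ k * xx ^ (n * m)) * tt := by group
        _ = xx ^ (n ^ k * (n * m)) * tt ^ k * tt := by rw [ih]
        _ = xx ^ (n ^ (k+1) * m) * tt ^ (k+1) := by rw [pow_succ]; ring_nf; group

lemma BS_L1 (c : ℕ) (m : ℤ) : xx ^ m * (tt⁻¹) ^ c = (tt⁻¹) ^ c * xx ^ (n ^ c * m) := by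
  have h := BS_L2 n c m
  rw [inv_pow]
  calc xx ^ m * (tt ^ c)⁻¹ = (tt ^ c)⁻¹ * (tt ^ c * xx ^ m) * (tt ^ c)⁻¹ := by group
    _ = (tt ^ c)⁻¹ * (xx ^ (n ^ c * m) * tt ^ c) * (tt ^ c)⁻¹ := by rw [h]
    _ = (tt ^ c)⁻¹ * xx ^ (n ^ c * m) := by group

/-- canonical form -/
noncomputable def Nf (a : ℕ) (m b : ℤ) : PresentedGroup (BSrel n) :=
  (tt⁻¹) ^ a * xx ^ m * tt ^ b

lemma Nf_shift (a : ℕ) (m b : ℤ) (c : ℕ) :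
    Nf n a m b = Nf n (a + c) (n ^ c * m) (b + c) := by
  unfold Nf
  rw [pow_add]
  symm
  have key : (tt⁻¹) ^ c * xx ^ (n ^ c * m) = xx ^ m * (tt⁻¹) ^ c := (BS_L1 n c m).symm
  calc (tt⁻¹) ^ a * (tt⁻¹) ^ c * xx ^ (n ^ c * m) * tt ^ (b + c)
      = (tt⁻¹) ^ a * ((tt⁻¹) ^ c * xx ^ (n ^ c * m)) * tt ^ (b + c) := by group
    _ = (tt⁻¹) ^ a * (xx ^ m * (tt⁻¹) ^ c) * tt ^ (b + c) := by rw [key]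
    _ = (tt⁻¹) ^ a * xx ^ m * ((tt⁻¹) ^ c * tt ^ (b + c)) := by group
    _ = (tt⁻¹) ^ a * xx ^ m * tt ^ b := by
        congr 1
        rw [inv_pow, ← zpow_natCast tt c, ← zpow_neg, ← zpow_add]
        congr 1
        omega

lemma Nf_mul (a : ℕ) (m b : ℤ) (a' : ℕ) (m' b' : ℤ) :
    ∃ A : ℕ, ∃ M B : ℤ, Nf n a m b * Nf n a' m' b' = Nf n A M B := by
  rcases le_or_gt (a' : ℤ) b with h | h
  · -- b - a' ≥ 0
    set c : ℕ := (b - a').toNat with hc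
    have hb : b = a' + c := by omega
    refine ⟨a, m + n ^ c * m', c + b', ?_⟩
    have step : tt ^ b * (tt⁻¹) ^ a' = tt ^ (c : ℤ) := by
      rw [inv_pow, ← zpow_natCast tt a', ← zpow_neg, ← zpow_add]
      congr 1; omega
    have l2 : tt ^ c * xx ^ m' = xx ^ (n ^ c * m') * tt ^ c := BS_L2 n c m'
    unfold Nf
    calc (tt⁻¹) ^ a * xx ^ m * tt ^ b * ((tt⁻¹) ^ a' * xx ^ m' * tt ^ b')
        = (tt⁻¹) ^ a * xx ^ m * (tt ^ b * (tt⁻¹) ^ a') * (xx ^ m' * tt ^ b') := by group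
      _ = (tt⁻¹) ^ a * xx ^ m * (tt ^ (c:ℤ)) * (xx ^ m' * tt ^ b') := by rw [step]
      _ = (tt⁻¹) ^ a * xx ^ m * ((tt ^ c * xx ^ m') * tt ^ b') := by
          rw [zpow_natCast]; group
      _ = (tt⁻¹) ^ a * xx ^ m * ((xx ^ (n ^ c * m') * tt ^ c) * tt ^ b') := by rw [l2]
      _ = (tt⁻¹) ^ a * (xx ^ m * xx ^ (n ^ c * m')) * (tt ^ c * tt ^ b') := by group
      _ = (tt⁻¹) ^ a * xx ^ (m + n ^ c * m') * tt ^ ((c:ℤ) + b') := by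
          rw [← zpow_add, ← zpow_natCast tt c, ← zpow_add]
  · -- b - a' < 0
    set c : ℕ := (a' - b).toNat with hc
    have hb : (a' : ℤ) = b + c := by omega
    refine ⟨a + c, n ^ c * m + m', b', ?_⟩
    have step : tt ^ b * (tt⁻¹) ^ a' = (tt⁻¹) ^ c := by
      rw [inv_pow, inv_pow, ← zpow_natCast tt a', ← zpow_natCast tt c, ← zpow_neg, ← zpow_neg,
        ← zpow_add]
      congr 1; omega
    have l1 : xx ^ m * (tt⁻¹) ^ c = (tt⁻¹) ^ c * xx ^ (n ^ c * m) := BS_L1 n c m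
    unfold Nf
    calc (tt⁻¹) ^ a * xx ^ m * tt ^ b * ((tt⁻¹) ^ a' * xx ^ m' * tt ^ b')
        = (tt⁻¹) ^ a * (xx ^ m * (tt ^ b * (tt⁻¹) ^ a')) * (xx ^ m' * tt ^ b') := by group
      _ = (tt⁻¹) ^ a * (xx ^ m * (tt⁻¹) ^ c) * (xx ^ m' * tt ^ b') := by rw [step]
      _ = (tt⁻¹) ^ a * ((tt⁻¹) ^ c * xx ^ (n ^ c * m)) * (xx ^ m' * tt ^ b') := by rw [l1]
      _ = ((tt⁻¹) ^ a * (tt⁻¹) ^ c) * (xx ^ (n ^ c * m) * xx ^ m') * tt ^ b' := by group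
      _ = (tt⁻¹) ^ (a + c) * xx ^ (n ^ c * m + m') * tt ^ b' := by
          rw [pow_add, ← zpow_add]

lemma Nf_surj (g : PresentedGroup (BSrel n)) : ∃ a : ℕ, ∃ m b : ℤ, g = Nf n a m b := by
  induction g using QuotientGroup.induction_on with
  | H w =>
    induction w using FreeGroup.induction_on with
    | C1 => exact ⟨0, 0, 0, by simp [Nf]; rfl⟩
    | of b =>
        cases b
        · exact ⟨0, 1, 0, by simp [Nf]; rfl⟩
        · exact ⟨0, 0, 1, by simp [Nf]; rfl⟩
    | inv_of b =>
        cases b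
        · exact ⟨0, -1, 0, by simp [Nf]; rfl⟩
        · exact ⟨1, 0, 0, by simp [Nf]; rfl⟩
    | mul u v hu hv =>
        obtain ⟨a, m, b, hu⟩ := hu
        obtain ⟨a', m', b', hv⟩ := hv
        have : (QuotientGroup.mk (u * v) : PresentedGroup (BSrel n)) =
            QuotientGroup.mk u * QuotientGroup.mk v := rfl
        rw [this, hu, hv]
        exact Nf_mul n a m b a' m' b'

end BSide

namespace GammaCT
variable (n : ℤ) (hn : n ≠ 0)

lemma Gamma_rel : Tg n hn * Xg n hn * (Tg n hn)⁻¹ * (Xg n hn) ^ (-n) = 1 := by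
  have hXg : (Tg n hn)⁻¹ ^ 1 * (Xg n hn) ^ n * (Tg n hn) ^ (1 : ℤ) = Xg n hn := by
    rw [form n hn 1 n 1, Xg]
    have hl : nInv n * ((n : ℤ) : Rn n) = 1 :=
      Subtype.ext (by push_cast [nInv]; exact inv_mul_cancel₀ (by exact_mod_cast hn))
    apply SemidirectProduct.ext
    · simp [hl]
    · simp
  have h3 : Tg n hn * Xg n hn * (Tg n hn)⁻¹ = Xg n hn ^ n := by
    conv_lhs => rw [← hXg]
    group
  rw [h3]
  group

lemma nInv_val : ((nInv n : Rn n) : ℚ) = (n : ℚ)⁻¹ := rfl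

end GammaCT

/-- the homomorphism `BS(1,n) → Γ_n` with
`x ↦ ((1,0),(0,0))` and `t ↦ ((0,0),(1,0))` is well defined and injective;
in particular `Γ_n` contains a subgroup isomorphic to `BS(1,n)`. -/
theorem stmt11 (n : ℤ) (hn : n ≠ 0) :
    (∃ f : BS n →* Gamma n hn,
      f (PresentedGroup.of false) =
        SemidirectProduct.inl (Multiplicative.ofAdd ((1 : Rn n), (0 : Rn n))) ∧
      f (PresentedGroup.of true) =
        SemidirectProduct.inr (Multiplicative.ofAdd ((1 : ℤ), (0 : ℤ))) ∧
      Function.Injective f) ∧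
    ∃ H : Subgroup (Gamma n hn), Nonempty (BS n ≃* H) := by
  classical
  have hrel : ∀ r ∈ BSrel n,
      FreeGroup.lift (fun b => cond b (Tg n hn) (Xg n hn)) r = 1 := by
    intro r hr
    rw [BSrel, Set.mem_singleton_iff] at hr
    subst hr
    simp only [map_mul, map_inv, map_zpow, FreeGroup.lift_apply_of, cond_true, cond_false]
    exact Gamma_rel n hn
  let f : BS n →* Gamma n hn := PresentedGroup.toGroup hrel
  have hfx : f (PresentedGroup.of false) = Xg n hn := PresentedGroup.toGroup.of hrel
  have hft : f (PresentedGroup.of true) = Tg n hn := PresentedGroup.toGroup.of hrel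
  have hN : ∀ (a : ℕ) (m b : ℤ), f (Nf n a m b) =
      ⟨Multiplicative.ofAdd ((nInv n) ^ a * (m : Rn n), (0 : Rn n)),
       Multiplicative.ofAdd ((b - a : ℤ), (0 : ℤ))⟩ := by
    intro a m b
    erw [Nf, map_mul, map_mul, map_zpow, map_zpow, map_pow, map_inv, hfx, hft, form]
  have hinj : Function.Injective f := by
    intro g h hgh
    obtain ⟨a, m, b, rfl⟩ := Nf_surj n g
    obtain ⟨a', m', b', rfl⟩ := Nf_surj n h
    rw [hN, hN] at hgh
    rw [SemidirectProduct.ext_iff] at hgh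
    obtain ⟨hleft, hright⟩ := hgh
    have hp := Multiplicative.ofAdd.injective hleft
    have hb : b - (a : ℤ) = b' - a' :=
      congrArg Prod.fst (Multiplicative.ofAdd.injective hright)
    have h1 : (nInv n) ^ a * (m : Rn n) = (nInv n) ^ a' * (m' : Rn n) :=
      congrArg Prod.fst hp
    have hq : ((n : ℚ)⁻¹) ^ a * (m : ℚ) = ((n : ℚ)⁻¹) ^ a' * (m' : ℚ) := by
      have := congrArg Subtype.val h1
      push_cast [nInv_val] at this
      exact this
    have hnq : (n : ℚ) ≠ 0 := by exact_mod_cast hn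
    rw [inv_pow, inv_pow] at hq
    field_simp at hq
    have hz : (m : ℤ) * n ^ a' = m' * n ^ a := by rw [mul_comm (m' : ℤ)]; exact_mod_cast hq
    have hba : b + (a' : ℤ) = b' + a := by omega
    calc Nf n a m b = Nf n (a + a') (n ^ a' * m) (b + a') := Nf_shift n a m b a'
      _ = Nf n (a' + a) (n ^ a * m') (b' + a) := by
          rw [add_comm a a', hba]
          congr 1
          rw [mul_comm (m:ℤ) _, mul_comm (m':ℤ) _] at hz
          rw [hz]
      _ = Nf n a' m' b' := (Nf_shift n a' m' b' a).symm
  refine ⟨⟨f, hfx, hft, hinj⟩, ⟨f.range, ⟨MonoidHom.ofInjective hinj⟩⟩⟩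
end
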